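/- Let Ψ_X, Ψ_Y ∈ ℂ^{M×N}, let W ∈ ℝ^{M×M} be a diagonal matrix with positive diagonal entries, set G = Ψ_X* W Ψ_X and A = Ψ_X* W Ψ_Y, and assume G is invertible (equivalently, W^{1/2} Ψ_X has rank N). Then the matrix K = G^{−1}(A + A*)/2 solves the constrained least-squares problem: K minimizes ‖W^{1/2} Ψ_Y G^{−1/2} − W^{1/2} Ψ_X K' G^{−1/2}‖_F over all K' ∈ ℂ^{N×N} satisfying G K' = (K')* G. Moreover, K itself satisfies the constraint G K = K* G. -/

import Mathlib

open scoped Matrix ComplexOrder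

noncomputable def fsq {m n : Type*} [Fintype m] [Fintype n]
    (Z : Matrix m n ℂ) : ℝ :=
  ∑ i, ∑ j, ‖Z i j‖ ^ 2

lemma fsq_nonneg {m n : Type*} [Fintype m] [Fintype n] (Z : Matrix m n ℂ) :
    0 ≤ fsq Z := by
  unfold fsq; positivity

lemma fsq_eq_trace {m n : Type*} [Fintype m] [Fintype n] (Z : Matrix m n ℂ) :
    fsq Z = ((Zᴴ * Z).trace).re := by
  simp only [fsq, Matrix.trace, Matrix.diag, Matrix.mul_apply, Matrix.conjTranspose_apply]
  rw [Finset.sum_comm, Complex.re_sum]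
  refine Finset.sum_congr rfl fun j _ => ?_
  rw [Complex.re_sum]
  refine Finset.sum_congr rfl fun i _ => ?_
  rw [show star (Z i j) * Z i j = ((Complex.normSq (Z i j) : ℝ) : ℂ) by
    rw [Complex.star_def, mul_comm, Complex.mul_conj]]
  rw [Complex.ofReal_re, ← Complex.sq_norm]

lemma fsq_add_of_orth {m n : Type*} [Fintype m] [Fintype n] (X Y : Matrix m n ℂ)
    (h : ((Xᴴ * Y).trace).re = 0) : fsq (X + Y) = fsq X + fsq Y := by
  rw [fsq_eq_trace, fsq_eq_trace, fsq_eq_trace]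
  have expand : (X + Y)ᴴ * (X + Y) = Xᴴ * X + (Xᴴ * Y + (Yᴴ * X + Yᴴ * Y)) := by
    rw [Matrix.conjTranspose_add, Matrix.add_mul, Matrix.mul_add, Matrix.mul_add]
    abel
  have hYX : ((Yᴴ * X).trace).re = 0 := by
    have : (Yᴴ * X).trace = star ((Xᴴ * Y).trace) := by
      rw [← Matrix.trace_conjTranspose, Matrix.conjTranspose_mul, Matrix.conjTranspose_conjTranspose]
    rw [this, Complex.star_def, Complex.conj_re, h]
  rw [expand, Matrix.trace_add, Matrix.trace_add, Matrix.trace_add]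
  simp only [Complex.add_re, h, hYX]
  ring

lemma fsq_unitary_mul {m n : Type*} [Fintype m] [Fintype n] [DecidableEq n]
    (Q : Matrix m n ℂ) (Z : Matrix n n ℂ) (hQ : Qᴴ * Q = 1) :
    fsq (Q * Z) = fsq Z := by
  rw [fsq_eq_trace, fsq_eq_trace]
  congr 2
  rw [Matrix.conjTranspose_mul, Matrix.mul_assoc, ← Matrix.mul_assoc Qᴴ, hQ,
    Matrix.one_mul]

lemma key_ineq {m n : Type*} [Fintype m] [Fintype n] [DecidableEq n]
    (Q C : Matrix m n ℂ) (T' : Matrix n n ℂ) (hQ : Qᴴ * Q = 1) (hT' : T'ᴴ = T') :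
    fsq (C - Q * (((1 : ℂ)/2) • (Qᴴ * C + Cᴴ * Q))) ≤ fsq (C - Q * T') := by
  set D : Matrix n n ℂ := Qᴴ * C with hD
  have hDH : Dᴴ = Cᴴ * Q := by
    rw [hD, Matrix.conjTranspose_mul, Matrix.conjTranspose_conjTranspose]
  have hQ' : ∀ B : Matrix n n ℂ, Qᴴ * (Q * B) = B := fun B => by
    rw [← Matrix.mul_assoc, hQ, Matrix.one_mul]
  set Sk : Matrix n n ℂ := D - ((1 : ℂ)/2) • (D + Dᴴ) with hSk
  have decomp : ∀ T : Matrix n n ℂ, C - Q * T = (C - Q * D) + Q * (D - T) := by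
    intro T
    rw [Matrix.mul_sub]
    abel
  have orth1 : ∀ T : Matrix n n ℂ, (((C - Q * D)ᴴ * (Q * (D - T))).trace).re = 0 := by
    intro T
    have h0 : (C - Q * D)ᴴ * (Q * (D - T)) = 0 := by
      simp only [Matrix.conjTranspose_sub, Matrix.conjTranspose_mul, Matrix.sub_mul,
        Matrix.mul_assoc, hQ']
      rw [← Matrix.mul_assoc Cᴴ Q, ← hDH, sub_self]
    rw [h0, Matrix.trace_zero, Complex.zero_re]
  have step1 : ∀ T : Matrix n n ℂ, fsq (C - Q * T) = fsq (C - Q * D) + fsq (D - T) := by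
    intro T
    rw [decomp T, fsq_add_of_orth _ _ (orth1 T), fsq_unitary_mul Q _ hQ]
  have orth2 : ∀ T : Matrix n n ℂ, Tᴴ = T →
      (((((1 : ℂ)/2) • (D + Dᴴ) - T)ᴴ * Sk).trace).re = 0 := by
    intro T hT
    set Zh : Matrix n n ℂ := ((1 : ℂ)/2) • (D + Dᴴ) - T with hZh
    have h2 : star ((1 : ℂ)/2) = (1 : ℂ)/2 := by
      simp
    have hZhH : Zhᴴ = Zh := by
      rw [hZh, Matrix.conjTranspose_sub, Matrix.conjTranspose_smul, Matrix.conjTranspose_add,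
        Matrix.conjTranspose_conjTranspose, hT, h2, add_comm Dᴴ D]
    have hSkH : Skᴴ = -Sk := by
      rw [hSk, Matrix.conjTranspose_sub, Matrix.conjTranspose_smul, Matrix.conjTranspose_add,
        Matrix.conjTranspose_conjTranspose, h2, add_comm Dᴴ D]
      ext i j
      simp only [Matrix.sub_apply, Matrix.add_apply, Matrix.smul_apply, Matrix.neg_apply,
        smul_eq_mul]
      ring
    have hstar : star ((Zhᴴ * Sk).trace) = -((Zhᴴ * Sk).trace) := by
      rw [hZhH, ← Matrix.trace_conjTranspose, Matrix.conjTranspose_mul, hSkH, hZhH,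
        Matrix.neg_mul, Matrix.trace_neg, Matrix.trace_mul_comm]
    have := congrArg Complex.re hstar
    rw [Complex.star_def, Complex.conj_re, Complex.neg_re] at this
    linarith
  have step2 : ∀ T : Matrix n n ℂ, Tᴴ = T →
      fsq (D - T) = fsq (((1 : ℂ)/2) • (D + Dᴴ) - T) + fsq Sk := by
    intro T hT
    have hdec : D - T = (((1 : ℂ)/2) • (D + Dᴴ) - T) + Sk := by
      rw [hSk]; abel
    rw [hdec, fsq_add_of_orth _ _ (orth2 T hT)]
  have hT0 : Dᴴᴴ = D := Matrix.conjTranspose_conjTranspose D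
  have lhs_eq : fsq (C - Q * (((1 : ℂ)/2) • (Qᴴ * C + Cᴴ * Q))) = fsq (C - Q * D) + fsq Sk := by
    rw [← hD, ← hDH, step1, hSk]
  have rhs_eq : fsq (C - Q * T') = fsq (C - Q * D) + (fsq (((1 : ℂ)/2) • (D + Dᴴ) - T') + fsq Sk) := by
    rw [step1 T', step2 T' hT']
  rw [lhs_eq, rhs_eq]
  have := fsq_nonneg (((1 : ℂ)/2) • (D + Dᴴ) - T')
  linarith
/-- The Frobenius norm of a complex matrix. -/
noncomputable def frobeniusNorm {m n : Type*} [Fintype m] [Fintype n]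
    (Z : Matrix m n ℂ) : ℝ :=
  Real.sqrt (∑ i, ∑ j, ‖Z i j‖ ^ 2)

/-- The positive semidefinite square root of a positive semidefinite matrix
(the definition removed from Mathlib, restated with its old meaning). -/
noncomputable def Matrix.PosSemidef.sqrt {n 𝕜 : Type*} [Fintype n] [DecidableEq n] [RCLike 𝕜]
    {A : Matrix n n 𝕜} (hA : A.PosSemidef) : Matrix n n 𝕜 :=
  hA.1.eigenvectorUnitary.1 * Matrix.diagonal ((↑) ∘ (√·) ∘ hA.1.eigenvalues) *
  (star hA.1.eigenvectorUnitary : Matrix n n 𝕜)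

lemma Matrix.PosSemidef.sqrt_mul_self' {n 𝕜 : Type*} [Fintype n] [DecidableEq n] [RCLike 𝕜]
    {A : Matrix n n 𝕜} (hA : A.PosSemidef) : hA.sqrt * hA.sqrt = A := by
  have hU : (star hA.1.eigenvectorUnitary : Matrix n n 𝕜) * hA.1.eigenvectorUnitary.1 = 1 :=
    Unitary.star_mul_self_of_mem hA.1.eigenvectorUnitary.2
  have hD : Matrix.diagonal ((↑) ∘ (√·) ∘ hA.1.eigenvalues) *
      Matrix.diagonal ((↑) ∘ (√·) ∘ hA.1.eigenvalues) =
      Matrix.diagonal (RCLike.ofReal ∘ hA.1.eigenvalues : n → 𝕜) := by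
    rw [Matrix.diagonal_mul_diagonal]
    congr 1; funext i
    simp only [Function.comp_apply, ← RCLike.ofReal_mul, Real.mul_self_sqrt (hA.eigenvalues_nonneg i)]
  conv_rhs => rw [hA.1.spectral_theorem]
  simp only [Matrix.PosSemidef.sqrt, Unitary.conjStarAlgAut_apply]
  set U : Matrix n n 𝕜 := hA.1.eigenvectorUnitary.1
  set D : Matrix n n 𝕜 := Matrix.diagonal ((↑) ∘ (√·) ∘ hA.1.eigenvalues)
  set sU : Matrix n n 𝕜 := (star hA.1.eigenvectorUnitary : Matrix n n 𝕜)
  rw [show U * D * sU * (U * D * sU) = U * (D * D) * sU by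
    simp only [Matrix.mul_assoc]; rw [← Matrix.mul_assoc sU U, hU, Matrix.one_mul], hD]

lemma Matrix.PosSemidef.sqrt_conjTranspose' {n 𝕜 : Type*} [Fintype n] [DecidableEq n] [RCLike 𝕜]
    {A : Matrix n n 𝕜} (hA : A.PosSemidef) : hA.sqrtᴴ = hA.sqrt := by
  simp only [Matrix.PosSemidef.sqrt, Matrix.conjTranspose_mul, Matrix.diagonal_conjTranspose,
    Matrix.mul_assoc]
  have : star (((↑) ∘ (√·) ∘ hA.1.eigenvalues : n → 𝕜)) = ((↑) ∘ (√·) ∘ hA.1.eigenvalues : n → 𝕜) := by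
    funext i
    simp only [Pi.star_apply, Function.comp_apply, RCLike.star_def, RCLike.conj_ofReal]
  rw [this]
  congr 2
  exact Matrix.conjTranspose_conjTranspose _

theorem hermitianDMD_stmt7 (M N : ℕ)
    (ΨX ΨY : Matrix (Fin M) (Fin N) ℂ)
    -- `W` is a diagonal matrix with positive (real) diagonal entries
    (w : Fin M → ℝ) (hw : ∀ m, 0 < w m)
    -- `G = ΨX* W ΨX` is assumed invertible; since it is automatically Hermitian positive
    -- semidefinite, this is equivalent to `G` being positive definite
    (hG : (ΨXᴴ * Matrix.diagonal (fun m => (w m : ℂ)) * ΨX).PosDef) :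
    -- abbreviations
    (let W : Matrix (Fin M) (Fin M) ℂ := Matrix.diagonal fun m => (w m : ℂ);
     let Whalf : Matrix (Fin M) (Fin M) ℂ := Matrix.diagonal fun m => (Real.sqrt (w m) : ℂ);
     let G : Matrix (Fin N) (Fin N) ℂ := ΨXᴴ * W * ΨX;
     let A : Matrix (Fin N) (Fin N) ℂ := ΨXᴴ * W * ΨY;
     let Ginvhalf : Matrix (Fin N) (Fin N) ℂ := (hG.posSemidef.sqrt)⁻¹;
     let K : Matrix (Fin N) (Fin N) ℂ := G⁻¹ * (((1 : ℂ) / 2) • (A + Aᴴ));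
     -- `K` satisfies the constraint and minimizes the objective among all constrained matrices
     G * K = Kᴴ * G ∧
       ∀ K' : Matrix (Fin N) (Fin N) ℂ, G * K' = K'ᴴ * G →
         frobeniusNorm (Whalf * ΨY * Ginvhalf - Whalf * ΨX * K * Ginvhalf) ≤
           frobeniusNorm (Whalf * ΨY * Ginvhalf - Whalf * ΨX * K' * Ginvhalf)) := by
  intro W Whalf G A Ginvhalf K
  have hGdef : G = ΨXᴴ * W * ΨX := rfl
  have hAdef : A = ΨXᴴ * W * ΨY := rfl
  have hKdef : K = G⁻¹ * (((1 : ℂ) / 2) • (A + Aᴴ)) := rfl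
  have hSdef : Ginvhalf = (hG.posSemidef.sqrt)⁻¹ := rfl
  have hWdef : W = Matrix.diagonal fun m => ((w m : ℝ) : ℂ) := rfl
  have hWhalfdef : Whalf = Matrix.diagonal fun m => ((Real.sqrt (w m) : ℝ) : ℂ) := rfl
  clear_value K Ginvhalf A G Whalf W
  have h2 : star ((1 : ℂ)/2) = (1 : ℂ)/2 := by simp
  have hsq : hG.posSemidef.sqrt * hG.posSemidef.sqrt = G := by
    rw [hGdef, hWdef]; exact hG.posSemidef.sqrt_mul_self'
  have hsqH : (hG.posSemidef.sqrt)ᴴ = hG.posSemidef.sqrt := hG.posSemidef.sqrt_conjTranspose'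
  have hGH : Gᴴ = G := by
    rw [hGdef, hWdef]; exact hG.posSemidef.1
  have hGdet : IsUnit G.det := by
    rw [hGdef, hWdef]; exact hG.det_pos.ne'.isUnit
  have hsqdet : IsUnit (hG.posSemidef.sqrt).det := by
    have h1 : (hG.posSemidef.sqrt).det * (hG.posSemidef.sqrt).det = G.det := by
      rw [← Matrix.det_mul, hsq]
    have h3 := hGdet
    rw [← h1] at h3
    exact isUnit_of_mul_isUnit_left h3
  have hS1 : Ginvhalf * hG.posSemidef.sqrt = 1 := by
    rw [hSdef]; exact Matrix.nonsing_inv_mul _ hsqdet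
  have hS2 : hG.posSemidef.sqrt * Ginvhalf = 1 := by
    rw [hSdef]; exact Matrix.mul_nonsing_inv _ hsqdet
  have hSH : Ginvhalfᴴ = Ginvhalf := by
    rw [hSdef, Matrix.conjTranspose_nonsing_inv, hsqH]
  have hGinv : G⁻¹ = Ginvhalf * Ginvhalf := by
    rw [← hsq, Matrix.mul_inv_rev, hSdef]
  have cancel1 : ∀ B : Matrix (Fin N) (Fin N) ℂ,
      Ginvhalf * (hG.posSemidef.sqrt * B) = B := fun B => by
    rw [← Matrix.mul_assoc, hS1, Matrix.one_mul]
  have cancel2 : ∀ B : Matrix (Fin N) (Fin N) ℂ,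
      hG.posSemidef.sqrt * (Ginvhalf * B) = B := fun B => by
    rw [← Matrix.mul_assoc, hS2, Matrix.one_mul]
  have hWhalfH : Whalfᴴ = Whalf := by
    rw [hWhalfdef, Matrix.diagonal_conjTranspose]
    refine congrArg _ (funext fun m => ?_)
    exact Complex.conj_ofReal _
  have hWH : Wᴴ = W := by
    rw [hWdef, Matrix.diagonal_conjTranspose]
    refine congrArg _ (funext fun m => ?_)
    exact Complex.conj_ofReal _
  have hWW : Whalf * Whalf = W := by
    rw [hWhalfdef, hWdef, Matrix.diagonal_mul_diagonal]
    refine congrArg _ (funext fun m => ?_)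
    rw [← Complex.ofReal_mul, Real.mul_self_sqrt (hw m).le]
  have cW : ∀ B : Matrix (Fin M) (Fin N) ℂ, Whalf * (Whalf * B) = W * B := fun B => by
    rw [← Matrix.mul_assoc, hWW]
  have hsq' : hG.posSemidef.sqrt * hG.posSemidef.sqrt = ΨXᴴ * W * ΨX := by
    rw [hsq, hGdef]
  have hGr : ∀ B : Matrix (Fin N) (Fin N) ℂ,
      ΨXᴴ * (W * (ΨX * B)) = hG.posSemidef.sqrt * (hG.posSemidef.sqrt * B) := fun B => by
    rw [← Matrix.mul_assoc, ← Matrix.mul_assoc, ← hsq', Matrix.mul_assoc]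
  have hHerm : (((1 : ℂ)/2) • (A + Aᴴ))ᴴ = ((1 : ℂ)/2) • (A + Aᴴ) := by
    rw [Matrix.conjTranspose_smul, Matrix.conjTranspose_add,
      Matrix.conjTranspose_conjTranspose, h2, add_comm]
  constructor
  · -- constraint for K
    have hL : G * K = ((1 : ℂ)/2) • (A + Aᴴ) := by
      rw [hKdef, ← Matrix.mul_assoc, Matrix.mul_nonsing_inv _ hGdet, Matrix.one_mul]
    have hR : Kᴴ * G = ((1 : ℂ)/2) • (A + Aᴴ) := by
      rw [hKdef, Matrix.conjTranspose_mul, hHerm, Matrix.conjTranspose_nonsing_inv, hGH,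
        Matrix.mul_assoc, Matrix.nonsing_inv_mul _ hGdet, Matrix.mul_one]
    rw [hL, hR]
  · intro K' hK'
    -- T' := sqrt * (K' * Ginvhalf) is Hermitian
    have hT'H : (hG.posSemidef.sqrt * (K' * Ginvhalf))ᴴ = hG.posSemidef.sqrt * (K' * Ginvhalf) := by
      rw [← hsq] at hK'
      have h := congrArg (fun B => Ginvhalf * B * Ginvhalf) hK'
      simp only [Matrix.mul_assoc, cancel1, hS2, Matrix.mul_one] at h
      rw [Matrix.conjTranspose_mul, Matrix.conjTranspose_mul, hSH, hsqH, Matrix.mul_assoc, ← h]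
    have hQunit : (Whalf * ΨX * Ginvhalf)ᴴ * (Whalf * ΨX * Ginvhalf) = 1 := by
      simp only [Matrix.conjTranspose_mul, hWhalfH, hSH, Matrix.mul_assoc, cW, hGr, cancel1, hS2]
    have hL : Whalf * ΨY * Ginvhalf - Whalf * ΨX * K * Ginvhalf =
        Whalf * ΨY * Ginvhalf - (Whalf * ΨX * Ginvhalf) *
          (((1 : ℂ)/2) • ((Whalf * ΨX * Ginvhalf)ᴴ * (Whalf * ΨY * Ginvhalf) +
            (Whalf * ΨY * Ginvhalf)ᴴ * (Whalf * ΨX * Ginvhalf))) := by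
      rw [hKdef, hGinv, hAdef]
      simp only [Matrix.conjTranspose_mul, Matrix.conjTranspose_smul, Matrix.conjTranspose_add,
        Matrix.conjTranspose_conjTranspose, hWhalfH, hSH, hWH, Matrix.mul_assoc, Matrix.mul_smul,
        Matrix.smul_mul, Matrix.mul_add, Matrix.add_mul, cancel1, cancel2, cW]
    have hR : Whalf * ΨY * Ginvhalf - Whalf * ΨX * K' * Ginvhalf =
        Whalf * ΨY * Ginvhalf - (Whalf * ΨX * Ginvhalf) *
          (hG.posSemidef.sqrt * (K' * Ginvhalf)) := by
      simp only [Matrix.mul_assoc, cancel1]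
    show Real.sqrt (fsq _) ≤ Real.sqrt (fsq _)
    rw [hL, hR]
    exact Real.sqrt_le_sqrt (key_ineq _ _ _ hQunit hT'H)
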